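/- The space S^n(ℝ^{m*}) ⊗ ℝ^m ⊗ ℝ^{m*} ⊗ ℝ^{m*} decomposes as the direct sum of C_n := ker(γ_n) and the image of the linear map g ↦ ∑_{i,j} (∂²g/∂z^i∂z^j) ⊗ u^i ⊗ v^j from S^{n+2}(ℝ^{m*}) ⊗ ℝ^m. -/

import Mathlib

open MvPolynomial

private lemma deg_univ {m : ℕ} (d : Fin m →₀ ℕ) : d.degree = ∑ i, d i :=
  Finset.sum_subset (Finset.subset_univ _)
    (fun x _ hx => Finsupp.notMem_support_iff.mp hx)

private lemma sum_single_apply {m : ℕ} (i : Fin m) :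
    ∑ j, (Finsupp.single i 1 : Fin m →₀ ℕ) j = 1 := by
  simp [Finsupp.single_apply]

private lemma X_mul_pderiv_monomial {m : ℕ} (i : Fin m) (d : Fin m →₀ ℕ) (c : ℝ) :
    X i * pderiv i (monomial d c) = (d i : ℝ) • monomial d c := by
  rw [pderiv_monomial]
  rcases Nat.eq_zero_or_pos (d i) with hd | hd
  · simp [hd]
  · have hle : Finsupp.single i 1 ≤ d := by
      rwa [Finsupp.single_le_iff]
    have hX : (X i : MvPolynomial (Fin m) ℝ) = monomial (Finsupp.single i 1) 1 := rfl
    rw [hX, monomial_mul, smul_monomial]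
    congr 1
    · rw [add_comm, tsub_add_cancel_of_le hle]
    · simp [smul_eq_mul, mul_comm]

private lemma euler {m k : ℕ} (f : MvPolynomial (Fin m) ℝ) (hf : f.IsHomogeneous k) :
    ∑ i, X i * pderiv i f = (k : ℝ) • f := by
  have hrw : ∑ i, X i * pderiv i f
      = ∑ i, X i * pderiv i (∑ d ∈ f.support, monomial d (coeff d f)) := by
    rw [← f.as_sum]
  rw [hrw]
  simp_rw [map_sum, Finset.mul_sum]
  rw [Finset.sum_comm]
  have hterm : ∀ d ∈ f.support,
      ∑ i, X i * pderiv i (monomial d (coeff d f)) = (k : ℝ) • monomial d (coeff d f) := by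
    intro d hd
    have hdeg : d.degree = k := by
      have := hf (mem_support_iff.mp hd)
      rw [Finsupp.degree_eq_weight_one]; exact this
    calc ∑ i, X i * pderiv i (monomial d (coeff d f))
        = ∑ i, (d i : ℝ) • monomial d (coeff d f) := by
          simp_rw [_root_.X_mul_pderiv_monomial]
      _ = ((∑ i, d i : ℕ) : ℝ) • monomial d (coeff d f) := by
          rw [← Finset.sum_smul]; push_cast; ring_nf
      _ = (k : ℝ) • monomial d (coeff d f) := by
          rw [← deg_univ, hdeg]
  rw [Finset.sum_congr rfl hterm, ← Finset.smul_sum, ← f.as_sum]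

private lemma pderiv_homog {m k : ℕ} (i : Fin m) (f : MvPolynomial (Fin m) ℝ)
    (hf : f.IsHomogeneous (k + 1)) : (pderiv i f).IsHomogeneous k := by
  have : pderiv i f = ∑ d ∈ f.support, monomial (d - Finsupp.single i 1) (coeff d f * d i) := by
    conv_lhs => rw [f.as_sum]
    rw [map_sum]
    simp_rw [pderiv_monomial]
  rw [this]
  apply IsHomogeneous.sum
  intro d hd
  rcases Nat.eq_zero_or_pos (d i) with h0 | h0
  · rw [h0]
    simp only [Nat.cast_zero, mul_zero, map_zero]
    exact isHomogeneous_zero _ _ _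
  · apply isHomogeneous_monomial
    have hdeg : d.degree = k + 1 := by
      have := hf (mem_support_iff.mp hd)
      rw [Finsupp.degree_eq_weight_one]; exact this
    have hle : Finsupp.single i 1 ≤ d := by rwa [Finsupp.single_le_iff]
    have hadd : (d - Finsupp.single i 1) + Finsupp.single i 1 = d :=
      tsub_add_cancel_of_le hle
    have hfun : ∀ j : Fin m, (d - Finsupp.single i 1 : Fin m →₀ ℕ) j
        + (Finsupp.single i 1 : Fin m →₀ ℕ) j = d j := by
      intro j; rw [← Finsupp.add_apply, hadd]
    have : (d - Finsupp.single i 1).degree + 1 = k + 1 := by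
      rw [deg_univ]
      calc (∑ x, (d - Finsupp.single i 1 : Fin m →₀ ℕ) x) + 1
          = ∑ x, ((d - Finsupp.single i 1 : Fin m →₀ ℕ) x
              + (Finsupp.single i 1 : Fin m →₀ ℕ) x) := by
            rw [Finset.sum_add_distrib, sum_single_apply]
        _ = ∑ x, d x := Finset.sum_congr rfl fun j _ => hfun j
        _ = k + 1 := by rw [← deg_univ, hdeg]
    omega

private lemma hess_identity {m k : ℕ} (g : MvPolynomial (Fin m) ℝ)
    (hg : g.IsHomogeneous (k + 2)) :
    ∑ i, ∑ j, pderiv i (pderiv j g) * X i * X j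
      = (((k : ℝ) + 1) * ((k : ℝ) + 2)) • g := by
  rw [Finset.sum_comm]
  have hinner : ∀ j : Fin m, ∑ i, pderiv i (pderiv j g) * X i * X j
      = ((k : ℝ) + 1) • (X j * pderiv j g) := by
    intro j
    have hpd : (pderiv j g).IsHomogeneous (k + 1) := pderiv_homog j g hg
    have he := euler (pderiv j g) hpd
    calc ∑ i, pderiv i (pderiv j g) * X i * X j
        = (∑ i, X i * pderiv i (pderiv j g)) * X j := by
          rw [Finset.sum_mul]; congr 1; funext i; ring
      _ = ((k + 1 : ℕ) : ℝ) • (pderiv j g) * X j := by rw [he]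
      _ = ((k : ℝ) + 1) • (X j * pderiv j g) := by
          push_cast
          rw [smul_mul_assoc, mul_comm]
  rw [Finset.sum_congr rfl fun j _ => hinner j, ← Finset.smul_sum, euler g hg]
  rw [smul_smul]
  push_cast
  ring_nf

private lemma smul_homog {m k : ℕ} (r : ℝ) (f : MvPolynomial (Fin m) ℝ)
    (hf : f.IsHomogeneous k) : (r • f).IsHomogeneous k := by
  rw [← C_mul']
  exact hf.C_mul r

/-- `Sⁿ(ℝ^{m*}) ⊗ ℝ^m ⊗ ℝ^{m*} ⊗ ℝ^{m*} = Cₙ ⊕ Im(Hess)`, where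
`Cₙ = ker γₙ` (with `γₙ(T) l = ∑_{i,j} T l i j · z^i z^j`) and `Hess` sends
`g ∈ S^{n+2}(ℝ^{m*}) ⊗ ℝ^m` to `∑_{i,j} (∂²g/∂z^i∂z^j) ⊗ u^i ⊗ v^j`.  The direct-sum
decomposition is expressed as unique decomposability of every element `T`. -/
theorem directSum_ker_gamma_im_hessian (m n : ℕ) :
    ∀ T : Fin m → Fin m → Fin m → MvPolynomial (Fin m) ℝ,
      (∀ l i j, (T l i j).IsHomogeneous n) →
      ∃! cg : (Fin m → Fin m → Fin m → MvPolynomial (Fin m) ℝ) ×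
              (Fin m → MvPolynomial (Fin m) ℝ),
        (∀ l i j, (cg.1 l i j).IsHomogeneous n) ∧
        (∀ l, (cg.2 l).IsHomogeneous (n + 2)) ∧
        (∀ l, ∑ i, ∑ j, cg.1 l i j * X i * X j = 0) ∧
        (∀ l i j, T l i j = cg.1 l i j + pderiv i (pderiv j (cg.2 l))) := by
  intro T hT
  set r : ℝ := ((n : ℝ) + 1) * ((n : ℝ) + 2) with hr
  have hrpos : (0 : ℝ) < r := by positivity
  have hrne : r ≠ 0 := ne_of_gt hrpos
  set P : Fin m → MvPolynomial (Fin m) ℝ :=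
    fun l => ∑ i, ∑ j, T l i j * X i * X j with hP
  have hPhom : ∀ l, (P l).IsHomogeneous (n + 2) := by
    intro l
    apply IsHomogeneous.sum
    intro i _
    apply IsHomogeneous.sum
    intro j _
    exact ((hT l i j).mul (isHomogeneous_X ℝ i)).mul (isHomogeneous_X ℝ j)
  set g : Fin m → MvPolynomial (Fin m) ℝ := fun l => r⁻¹ • P l with hg
  have hghom : ∀ l, (g l).IsHomogeneous (n + 2) := fun l => smul_homog _ _ (hPhom l)
  have hhess : ∀ l, ∑ i, ∑ j, pderiv i (pderiv j (g l)) * X i * X j = P l := by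
    intro l
    have : ∑ i, ∑ j, pderiv i (pderiv j (g l)) * X i * X j = r • g l :=
      hess_identity (g l) (hghom l)
    rw [this, hg]
    simp only [smul_smul, mul_inv_cancel₀ hrne, one_smul]
  set c : Fin m → Fin m → Fin m → MvPolynomial (Fin m) ℝ :=
    fun l i j => T l i j - pderiv i (pderiv j (g l)) with hc
  refine ⟨(c, g), ⟨?_, ?_, ?_, ?_⟩, ?_⟩
  · intro l i j
    exact (hT l i j).sub (pderiv_homog i _ (pderiv_homog j _ (hghom l)))
  · exact hghom
  · intro l
    have : ∑ i, ∑ j, c l i j * X i * X j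
        = (∑ i, ∑ j, T l i j * X i * X j)
          - ∑ i, ∑ j, pderiv i (pderiv j (g l)) * X i * X j := by
      rw [← Finset.sum_sub_distrib]
      congr 1; funext i
      rw [← Finset.sum_sub_distrib]
      congr 1; funext j
      rw [hc]; ring
    rw [this, hhess l]
    have hPl : (∑ i, ∑ j, T l i j * X i * X j) = P l := rfl
    rw [hPl, sub_self]
  · intro l i j
    rw [hc]; ring
  · rintro ⟨c', g'⟩ ⟨hc'hom, hg'hom, hc'ker, hdecomp⟩
    have hgeq : g' = g := by
      funext l
      have h1 : P l = r • g' l := by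
        rw [hP]
        calc ∑ i, ∑ j, T l i j * X i * X j
            = ∑ i, ∑ j, (c' l i j * X i * X j
                + pderiv i (pderiv j (g' l)) * X i * X j) := by
              congr 1; funext i; congr 1; funext j
              rw [hdecomp l i j]; ring
          _ = (∑ i, ∑ j, c' l i j * X i * X j)
                + ∑ i, ∑ j, pderiv i (pderiv j (g' l)) * X i * X j := by
              rw [← Finset.sum_add_distrib]
              congr 1; funext i
              rw [← Finset.sum_add_distrib]
          _ = r • g' l := by
              rw [hc'ker l, zero_add]
              exact hess_identity (g' l) (hg'hom l)
      show g' l = r⁻¹ • P l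
      rw [h1, smul_smul, inv_mul_cancel₀ hrne, one_smul]
    have hceq : c' = c := by
      funext l i j
      show c' l i j = T l i j - pderiv i (pderiv j (g l))
      rw [← hgeq, hdecomp l i j]; ring
    exact Prod.ext hceq hgeq
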